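/- Let p be a prime, G a finite group, S a normal subgroup of G of order coprime to p, and P a p-subgroup of G such that G = S·C_G(P). Let D be a p-subgroup of G with P ≤ D ≤ C_G(P). Then N_G(D) ≤ C_G(P). -/

import Mathlib

/-- With `S ⊴ G` of order coprime to `p` and `P` a `p`-subgroup with
`G = S·C_G(P)`, any `p`-subgroup `D` with `P ≤ D ≤ C_G(P)` satisfies `N_G(D) ≤ C_G(P)`. -/
theorem stmt_13 (p : ℕ) (hp : p.Prime) (G : Type*) [Group G] [Finite G]
    (S : Subgroup G) (hS : S.Normal) (hScop : Nat.Coprime (Nat.card S) p)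
    (P : Subgroup G) (hP : IsPGroup p P)
    (hfact : ∀ g : G, ∃ s ∈ S, ∃ c ∈ Subgroup.centralizer (P : Set G), g = s * c)
    (D : Subgroup G) (hD : IsPGroup p D) (hPD : P ≤ D)
    (hDC : D ≤ Subgroup.centralizer (P : Set G)) :
    Subgroup.normalizer (D : Set G) ≤ Subgroup.centralizer (P : Set G) := by
  intro g hg
  obtain ⟨s, hsS, c, hcC, rfl⟩ := hfact g
  have hs : s ∈ Subgroup.centralizer (P : Set G) := by
    rw [Subgroup.mem_centralizer_iff]
    intro x hx
    -- the commutator t = s x s⁻¹ x⁻¹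
    set t := s * x * s⁻¹ * x⁻¹ with ht
    have hxc : c * x * c⁻¹ = x := by
      have h := (Subgroup.mem_centralizer_iff.mp hcC) x hx
      rw [← h, mul_inv_cancel_right]
    have hconj : s * x * s⁻¹ = (s * c) * x * (s * c)⁻¹ := by
      rw [mul_inv_rev]
      calc s * x * s⁻¹ = s * (c * x * c⁻¹) * s⁻¹ := by rw [hxc]
        _ = s * c * x * (c⁻¹ * s⁻¹) := by group
    have htD : t ∈ D := by
      have h1 : (s * c) * x * (s * c)⁻¹ ∈ D := by
        rw [Subgroup.mem_normalizer_iff] at hg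
        exact (hg x).mp (hPD hx)
      have h2 : s * x * s⁻¹ ∈ D := hconj ▸ h1
      exact mul_mem h2 (inv_mem (hPD hx))
    have htS : t ∈ S := by
      have h1 : x * s⁻¹ * x⁻¹ ∈ S := hS.conj_mem s⁻¹ (inv_mem hsS) x
      have : t = s * (x * s⁻¹ * x⁻¹) := by simp [ht, mul_assoc]
      rw [this]
      exact mul_mem hsS h1
    have ht1 : t = 1 := by
      obtain ⟨k, hk⟩ := hD ⟨t, htD⟩
      have hdvd1 : orderOf t ∣ p ^ k := by
        have : orderOf (⟨t, htD⟩ : D) ∣ p ^ k := orderOf_dvd_of_pow_eq_one hk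
        rwa [Subgroup.orderOf_mk] at this
      have hdvd2 : orderOf t ∣ Nat.card S := by
        have : orderOf (⟨t, htS⟩ : S) ∣ Nat.card S := orderOf_dvd_natCard _
        rwa [Subgroup.orderOf_mk] at this
      have hcop : Nat.Coprime (Nat.card S) (p ^ k) := hScop.pow_right k
      have : orderOf t ∣ 1 := by
        have := Nat.dvd_gcd hdvd2 hdvd1
        rwa [Nat.Coprime.gcd_eq_one hcop] at this
      have := Nat.eq_one_of_dvd_one this
      exact orderOf_eq_one_iff.mp this
    have : s * x * s⁻¹ * x⁻¹ = 1 := ht1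
    calc x * s = (s * x * s⁻¹ * x⁻¹) * (x * s) := by rw [this]; group
      _ = s * x := by group
  exact mul_mem hs hcC
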